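/- Let f(n) = n² + b·n + c with b, c ∈ ℤ. If the sequence {λ(f(n))}_{n≥1} is constant (where defined and positive), then λ(f(n)) = +1 for all n in that range. -/
import Mathlib


/-- The Liouville function `λ(n) = (-1)^Ω(n)`. -/
def liouville (n : ℕ) : ℤ := (-1) ^ (ArithmeticFunction.cardFactors n)

lemma liouville_mul {a b : ℕ} (ha : a ≠ 0) (hb : b ≠ 0) :
    liouville (a * b) = liouville a * liouville b := by
  unfold liouville
  rw [ArithmeticFunction.cardFactors_mul ha hb, pow_add]

lemma liouville_sq (a : ℕ) : liouville a * liouville a = 1 := by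
  unfold liouville
  rw [← pow_add]
  exact Even.neg_one_pow (Even.add_self _)

/-- If `{λ(f(n))}_{n ≥ 1}` is constant for monic `f(n) = n² + b n + c` (with `f(n) > 0`
for `n ≥ 1`), then the constant value is `+1`. -/
theorem monic_quadratic_constant_is_one (b c : ℤ)
    (hpos : ∀ n : ℤ, 1 ≤ n → 0 < n ^ 2 + b * n + c)
    (hconst : ∀ n : ℤ, 1 ≤ n →
        liouville (n ^ 2 + b * n + c).toNat = liouville ((1 : ℤ) ^ 2 + b * 1 + c).toNat) :
    ∀ n : ℤ, 1 ≤ n → liouville (n ^ 2 + b * n + c).toNat = 1 := by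
  have h1 : (0:ℤ) < (1:ℤ) ^ 2 + b * 1 + c := hpos 1 le_rfl
  have h2 : (0:ℤ) < (2:ℤ) ^ 2 + b * 2 + c := hpos 2 (by norm_num)
  have hm : (1:ℤ) ≤ b + c + 2 := by linarith
  have key : ((b + c + 2) ^ 2 + b * (b + c + 2) + c)
      = ((1:ℤ) ^ 2 + b * 1 + c) * ((2:ℤ) ^ 2 + b * 2 + c) := by ring
  have hε := hconst (b + c + 2) hm
  have htn : ((1 ^ 2 + b * 1 + c) * (2 ^ 2 + b * 2 + c)).toNat
      = ((1:ℤ) ^ 2 + b * 1 + c).toNat * ((2:ℤ) ^ 2 + b * 2 + c).toNat := by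
    rw [← Nat.cast_inj (R := ℤ), Nat.cast_mul, Int.toNat_of_nonneg h1.le,
      Int.toNat_of_nonneg h2.le, Int.toNat_of_nonneg (mul_nonneg h1.le h2.le)]
  rw [key, htn,
    liouville_mul (by omega) (by omega),
    hconst 2 (by norm_num)] at hε
  -- hε : ε * ε = ε, and ε * ε = 1
  have hε1 : liouville ((1:ℤ) ^ 2 + b * 1 + c).toNat = 1 := by
    rw [← hε]; exact liouville_sq _
  intro n hn
  rw [hconst n hn, hε1]
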